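/- Consider the p-periodic discrete-time SIS system x(k+1) = x(k) + h((I - X(k))B̄(k) - D(k))x(k) with initial conditions in [0,1]^n. If ρ(M(p-1)⋯M(1)M(0)) < 1, where M(k) = I - hD(k) + hB̄(k), then the disease-free equilibrium x = 0 is globally exponentially stable: there exist α > 0 and 0 ≤ η < 1 such that ‖x(k)‖ ≤ α‖x(0)‖ηᵏ for all k ≥ 0 and all x(0) ∈ [0,1]^n. -/

import Mathlib

open Matrix Filter

noncomputable def specRad {m : Type*} [Fintype m] [DecidableEq m] (M : Matrix m m ℝ) : ℝ :=
  sSup {r : ℝ | ∃ μ ∈ spectrum ℂ (M.map (algebraMap ℝ ℂ)), r = ‖μ‖}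

noncomputable def mono {n : ℕ} (p : ℕ) (M : ℕ → Matrix (Fin n) (Fin n) ℝ) (k : ℕ) :
    Matrix (Fin n) (Fin n) ℝ :=
  (List.range p).foldl (fun A i => M (k + i) * A) 1

def SISdyn {n : ℕ} (h : ℝ) (β : ℕ → Fin n → Fin n → ℝ) (δ : ℕ → Fin n → ℝ)
    (x : ℕ → Fin n → ℝ) : Prop :=
  ∀ k i, x (k + 1) i = x k i + h * ((1 - x k i) * (∑ j, β k i j * x k j) - δ k i * x k i)

def MatIrreducible {n : ℕ} (M : Matrix (Fin n) (Fin n) ℝ) : Prop :=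
  ∀ S : Set (Fin n), S.Nonempty → Sᶜ.Nonempty → ∃ i ∈ S, ∃ j ∈ Sᶜ, M i j ≠ 0

/-! ### Auxiliary lemmas about `mono` -/

lemma mono_zero' {n : ℕ} (M : ℕ → Matrix (Fin n) (Fin n) ℝ) (k : ℕ) : mono 0 M k = 1 := rfl

lemma mono_succ' {n : ℕ} (r : ℕ) (M : ℕ → Matrix (Fin n) (Fin n) ℝ) (k : ℕ) :
    mono (r + 1) M k = M (k + r) * mono r M k := by
  unfold mono
  rw [List.range_succ, List.foldl_append]
  rfl

lemma mono_add' {n : ℕ} (a b : ℕ) (M : ℕ → Matrix (Fin n) (Fin n) ℝ) :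
    mono (a + b) M 0 = mono b M a * mono a M 0 := by
  induction b with
  | zero => simp [mono_zero']
  | succ b ih =>
    rw [← Nat.add_assoc, mono_succ', ih, mono_succ', Matrix.mul_assoc, Nat.zero_add]

lemma mono_shift' {n : ℕ} (p : ℕ) {M : ℕ → Matrix (Fin n) (Fin n) ℝ}
    (hper : ∀ k, M (k + p) = M k) (r : ℕ) (a : ℕ) :
    mono r M (a + p) = mono r M a := by
  induction r with
  | zero => rfl
  | succ r ih =>
    rw [mono_succ', mono_succ', ih]
    congr 1
    rw [show a + p + r = (a + r) + p by omega, hper]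

lemma mono_shift_mul' {n : ℕ} (p : ℕ) {M : ℕ → Matrix (Fin n) (Fin n) ℝ}
    (hper : ∀ k, M (k + p) = M k) (r : ℕ) (m : ℕ) :
    mono r M (m * p) = mono r M 0 := by
  induction m with
  | zero => simp
  | succ m ih => rw [show (m+1)*p = m*p + p by ring, mono_shift' p hper, ih]

lemma mono_mul_pow' {n : ℕ} (p : ℕ) {M : ℕ → Matrix (Fin n) (Fin n) ℝ}
    (hper : ∀ k, M (k + p) = M k) (m : ℕ) :
    mono (m * p) M 0 = (mono p M 0) ^ m := by
  induction m with
  | zero => simp [mono_zero']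
  | succ m ih =>
    rw [show (m+1)*p = m*p + p by ring, mono_add', mono_shift_mul' p hper, ih, pow_succ']

/-! ### Invariance of `[0,1]^n` -/

section Inv
variable {n : ℕ} {h : ℝ} (hh : 0 < h)
  {β : ℕ → Fin n → Fin n → ℝ} {δ : ℕ → Fin n → ℝ}
  (hβ0 : ∀ k i j, 0 ≤ β k i j) (hδ0 : ∀ k i, 0 ≤ δ k i)
  (hδ1 : ∀ k i, h * δ k i ≤ 1) (hβ1 : ∀ k i, h * ∑ j, β k i j ≤ 1)
  {x : ℕ → Fin n → ℝ} (hx : SISdyn h β δ x) (hx0 : ∀ i, x 0 i ∈ Set.Icc (0:ℝ) 1)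

include hh hβ0 hδ0 hδ1 hβ1 hx hx0 in
lemma x_mem_Icc' : ∀ k i, x k i ∈ Set.Icc (0:ℝ) 1 := by
  intro k
  induction k with
  | zero => exact hx0
  | succ k ih =>
    intro i
    obtain ⟨hi0, hi1⟩ := ih i
    have hs0 : 0 ≤ ∑ j, β k i j * x k j :=
      Finset.sum_nonneg fun j _ => mul_nonneg (hβ0 k i j) (ih j).1
    have hs1 : ∑ j, β k i j * x k j ≤ ∑ j, β k i j :=
      Finset.sum_le_sum fun j _ => mul_le_of_le_one_right (hβ0 k i j) (ih j).2
    have key : x (k+1) i = (1 - h * δ k i) * x k i + h * (1 - x k i) * (∑ j, β k i j * x k j) := by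
      rw [hx k i]; ring
    constructor
    · rw [key]
      have : 0 ≤ (1 - h * δ k i) * x k i :=
        mul_nonneg (by linarith [hδ1 k i]) hi0
      have : 0 ≤ h * (1 - x k i) * (∑ j, β k i j * x k j) :=
        mul_nonneg (mul_nonneg hh.le (by linarith)) hs0
      linarith
    · rw [key]
      have h1 : (1 - h * δ k i) * x k i ≤ x k i :=
        mul_le_of_le_one_left hi0 (by linarith [mul_nonneg hh.le (hδ0 k i)])
      have h2 : h * (1 - x k i) * (∑ j, β k i j * x k j) ≤ (1 - x k i) * (h * ∑ j, β k i j) := by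
        have := mul_le_mul_of_nonneg_left hs1 (mul_nonneg hh.le (by linarith : (0:ℝ) ≤ 1 - x k i))
        nlinarith
      have h3 : (1 - x k i) * (h * ∑ j, β k i j) ≤ 1 - x k i :=
        mul_le_of_le_one_right (by linarith) (hβ1 k i)
      linarith

end Inv

/-! ### Comparison with the linear system -/

section Cmp
variable {n : ℕ} {h : ℝ} {β : ℕ → Fin n → Fin n → ℝ} {δ : ℕ → Fin n → ℝ}
  {Mm : ℕ → Matrix (Fin n) (Fin n) ℝ}
  (hM : ∀ k, Mm k = 1 - h • Matrix.diagonal (δ k) + h • Matrix.of (β k))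

include hM in
lemma Mm_apply' : ∀ k i j, Mm k i j = (if i = j then 1 - h * δ k i else 0) + h * β k i j := by
  intro k i j
  rw [hM k]
  by_cases hij : i = j <;>
    simp [Matrix.add_apply, Matrix.sub_apply, Matrix.one_apply, Matrix.diagonal_apply, hij]

include hM in
lemma Mm_nonneg' (hh : 0 < h) (hβ0 : ∀ k i j, 0 ≤ β k i j) (hδ1 : ∀ k i, h * δ k i ≤ 1) :
    ∀ k i j, 0 ≤ Mm k i j := by
  intro k i j
  rw [Mm_apply' hM]
  have := hδ1 k i
  have := mul_nonneg hh.le (hβ0 k i j)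
  split <;> linarith

lemma mulVec_mono' {A : Matrix (Fin n) (Fin n) ℝ} {v w : Fin n → ℝ}
    (hA : ∀ i j, 0 ≤ A i j) (hvw : ∀ i, v i ≤ w i) : ∀ i, (A *ᵥ v) i ≤ (A *ᵥ w) i := fun i => by
  simpa [Matrix.mulVec, dotProduct] using
    Finset.sum_le_sum fun j (_ : j ∈ Finset.univ) => mul_le_mul_of_nonneg_left (hvw j) (hA i j)

include hM in
lemma mulVec_Mm_eq' (k : ℕ) (v : Fin n → ℝ) (i : Fin n) :
    (Mm k *ᵥ v) i = (1 - h * δ k i) * v i + h * ∑ j, β k i j * v j := by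
  simp only [Matrix.mulVec, dotProduct, Mm_apply' hM, add_mul, ite_mul, zero_mul,
    Finset.sum_add_distrib, Finset.sum_ite_eq, Finset.mem_univ, if_true, Finset.mul_sum]
  ring_nf

include hM in
lemma step_le' (hh : 0 < h) (hβ0 : ∀ k i j, 0 ≤ β k i j)
    {x : ℕ → Fin n → ℝ} (hx : SISdyn h β δ x)
    (hnn : ∀ k i, 0 ≤ x k i) (k : ℕ) (i : Fin n) :
    x (k + 1) i ≤ (Mm k *ᵥ x k) i := by
  rw [mulVec_Mm_eq' hM, hx k i]
  have hs0 : 0 ≤ ∑ j, β k i j * x k j :=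
    Finset.sum_nonneg fun j _ => mul_nonneg (hβ0 k i j) (hnn k j)
  nlinarith [mul_nonneg (mul_nonneg hh.le (hnn k i)) hs0]

end Cmp

/-! ### Spectral radius and geometric decay of powers -/

attribute [local instance] Matrix.linftyOpNormedRing Matrix.linftyOpNormedAlgebra

section Spec
variable {n : ℕ} [NeZero n]

omit [NeZero n] in
lemma map_norm_eq' (A : Matrix (Fin n) (Fin n) ℝ) :
    ‖A.map (algebraMap ℝ ℂ)‖ = ‖A‖ := by
  rw [Matrix.linfty_opNorm_def, Matrix.linfty_opNorm_def]
  congr 1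
  ext i
  congr 1
  ext j
  simp [Complex.norm_real]

omit [NeZero n] in
lemma map_pow_eq' (A : Matrix (Fin n) (Fin n) ℝ) (m : ℕ) :
    (A ^ m).map (algebraMap ℝ ℂ) = (A.map (algebraMap ℝ ℂ)) ^ m := by
  simpa using map_pow (algebraMap ℝ ℂ).mapMatrix A m

lemma spec_bound' (A : Matrix (Fin n) (Fin n) ℝ) {μ : ℂ}
    (hμ : μ ∈ spectrum ℂ (A.map (algebraMap ℝ ℂ))) : ‖μ‖ ≤ specRad A := by
  haveI : CompleteSpace (Matrix (Fin n) (Fin n) ℂ) := FiniteDimensional.complete ℂ _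
  apply le_csSup
  · refine ⟨‖A.map (algebraMap ℝ ℂ)‖, ?_⟩
    rintro r ⟨ν, hν, rfl⟩
    exact spectrum.norm_le_norm_of_mem hν
  · exact ⟨μ, hμ, rfl⟩

lemma pow_norm_bound' (A : Matrix (Fin n) (Fin n) ℝ) (hρ : specRad A < 1) :
    ∃ C > (0:ℝ), ∃ t : ℝ, 0 < t ∧ t < 1 ∧ ∀ m, ‖A ^ m‖ ≤ C * t ^ m := by
  haveI : CompleteSpace (Matrix (Fin n) (Fin n) ℂ) := FiniteDimensional.complete ℂ _
  set Ac := A.map (algebraMap ℝ ℂ) with hAc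
  set s : ℝ := max (specRad A) 0 with hs
  have hs1 : s < 1 := by simp [hs, hρ]
  have hs0 : 0 ≤ s := le_max_right _ _
  set t : ℝ := (s + 1) / 2 with ht
  have ht0 : 0 < t := by positivity
  have ht1 : t < 1 := by simp only [ht]; linarith
  have hst : s < t := by simp only [ht]; linarith
  have hrad : spectralRadius ℂ Ac ≤ ENNReal.ofReal s := by
    rw [spectralRadius]
    refine iSup₂_le fun μ hμ => ?_
    have h1 : ‖μ‖ ≤ s := le_max_of_le_left (spec_bound' A hμ)
    rw [← ENNReal.ofReal_coe_nnreal]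
    exact ENNReal.ofReal_le_ofReal (by simpa [Complex.norm_def] using h1)
  have hlim := spectrum.pow_norm_pow_one_div_tendsto_nhds_spectralRadius Ac
  have hev : ∀ᶠ m : ℕ in atTop, ENNReal.ofReal (‖Ac ^ m‖ ^ (1 / (m:ℝ))) < ENNReal.ofReal t := by
    apply hlim.eventually_lt_const
    exact lt_of_le_of_lt hrad (ENNReal.ofReal_lt_ofReal_iff ht0 |>.mpr hst)
  have hnormAc : ∀ m, ‖Ac ^ m‖ = ‖A ^ m‖ := by
    intro m
    rw [hAc, ← map_pow_eq', map_norm_eq']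
  obtain ⟨N, hN⟩ := eventually_atTop.mp (hev.and (eventually_ge_atTop 1))
  have key : ∀ m, N ≤ m → ‖A ^ m‖ ≤ t ^ m := by
    intro m hm
    obtain ⟨h1, h2⟩ := hN m hm
    have h3 : ‖Ac ^ m‖ ^ (1 / (m:ℝ)) < t :=
      (ENNReal.ofReal_lt_ofReal_iff ht0).mp h1
    have hmm : (m:ℝ) ≠ 0 := Nat.cast_ne_zero.mpr (by omega)
    have h4 : (‖Ac ^ m‖ ^ (1 / (m:ℝ))) ^ m ≤ t ^ m :=
      pow_le_pow_left₀ (Real.rpow_nonneg (norm_nonneg _) _) h3.le m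
    have h5 : (‖Ac ^ m‖ ^ (1 / (m:ℝ))) ^ m = ‖Ac ^ m‖ := by
      rw [← Real.rpow_natCast (‖Ac ^ m‖ ^ (1 / (m:ℝ))) m, ← Real.rpow_mul (norm_nonneg _),
        one_div, inv_mul_cancel₀ hmm, Real.rpow_one]
    rw [← hnormAc m, ← h5]
    exact h4
  refine ⟨1 + ∑ m ∈ Finset.range N, ‖A ^ m‖ * (t ^ m)⁻¹, by positivity, t, ht0, ht1, ?_⟩
  intro m
  by_cases hm : N ≤ m
  · calc ‖A ^ m‖ ≤ t ^ m := key m hm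
      _ ≤ _ := by
          rw [le_mul_iff_one_le_left (by positivity)]
          have : (0:ℝ) ≤ ∑ m ∈ Finset.range N, ‖A ^ m‖ * (t ^ m)⁻¹ :=
            Finset.sum_nonneg fun m _ => by positivity
          linarith
  · push_neg at hm
    have h1 : ‖A ^ m‖ * (t ^ m)⁻¹ ≤ ∑ j ∈ Finset.range N, ‖A ^ j‖ * (t ^ j)⁻¹ :=
      Finset.single_le_sum (f := fun j => ‖A ^ j‖ * (t ^ j)⁻¹)
        (fun j _ => by positivity) (Finset.mem_range.mpr hm)
    have h2 : ‖A ^ m‖ = (‖A ^ m‖ * (t ^ m)⁻¹) * t ^ m := by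
      field_simp
    rw [h2]
    have ht : (0:ℝ) < t ^ m := by positivity
    nlinarith

end Spec

theorem stmt6 {n : ℕ} (p : ℕ) (hp : 0 < p) (h : ℝ) (hh : 0 < h)
    (β : ℕ → Fin n → Fin n → ℝ) (δ : ℕ → Fin n → ℝ)
    (hperβ : ∀ k, β (k + p) = β k) (hperδ : ∀ k, δ (k + p) = δ k)
    (hβ0 : ∀ k i j, 0 ≤ β k i j) (hδ0 : ∀ k i, 0 ≤ δ k i)
    (hδ1 : ∀ k i, h * δ k i ≤ 1) (hβ1 : ∀ k i, h * ∑ j, β k i j ≤ 1)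
    (Mm : ℕ → Matrix (Fin n) (Fin n) ℝ)
    (hM : ∀ k, Mm k = 1 - h • Matrix.diagonal (δ k) + h • Matrix.of (β k))
    (hρ : specRad (mono p Mm 0) < 1) :
    ∃ α > (0:ℝ), ∃ η : ℝ, 0 ≤ η ∧ η < 1 ∧
      ∀ x : ℕ → Fin n → ℝ, SISdyn h β δ x → (∀ i, x 0 i ∈ Set.Icc (0:ℝ) 1) →
        ∀ k, ‖x k‖ ≤ α * ‖x 0‖ * η ^ k := by
  rcases Nat.eq_zero_or_pos n with hn | hn
  · subst hn
    refine ⟨1, one_pos, 1/2, by norm_num, by norm_num, fun x _ _ k => ?_⟩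
    have hx : ∀ m : ℕ, ‖x m‖ = 0 := fun m => by
      rw [show x m = 0 from Subsingleton.elim _ _, norm_zero]
    rw [hx k, hx 0]
    positivity
  haveI : NeZero n := ⟨hn.ne'⟩
  -- periodicity of Mm
  have hMper : ∀ k, Mm (k + p) = Mm k := fun k => by rw [hM, hM, hperβ, hperδ]
  -- geometric bound on powers of the monodromy matrix
  obtain ⟨C, hC, t, ht0, ht1, hCt⟩ := pow_norm_bound' (mono p Mm 0) hρ
  set A := mono p Mm 0 with hA
  -- bound on partial products
  set B : ℝ := 1 + ∑ r ∈ Finset.range p, ‖mono r Mm 0‖ with hB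
  have hB0 : 0 < B := by
    have : (0:ℝ) ≤ ∑ r ∈ Finset.range p, ‖mono r Mm 0‖ :=
      Finset.sum_nonneg fun r _ => norm_nonneg _
    simp only [hB]; linarith
  have hBr : ∀ r, r < p → ‖mono r Mm 0‖ ≤ B := by
    intro r hr
    have h1 : ‖mono r Mm 0‖ ≤ ∑ j ∈ Finset.range p, ‖mono j Mm 0‖ :=
      Finset.single_le_sum (f := fun j => ‖mono j Mm 0‖)
        (fun j _ => norm_nonneg _) (Finset.mem_range.mpr hr)
    simp only [hB]; linarith
  -- the decay rate
  set η : ℝ := t ^ ((p:ℝ)⁻¹) with hηdef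
  have hη0 : 0 ≤ η := Real.rpow_nonneg ht0.le _
  have hη1 : η < 1 := Real.rpow_lt_one ht0.le ht1 (by positivity)
  have hηp : η ^ p = t := by
    rw [hηdef, ← Real.rpow_natCast (t ^ ((p:ℝ)⁻¹)) p, ← Real.rpow_mul ht0.le,
      inv_mul_cancel₀ (Nat.cast_ne_zero.mpr hp.ne'), Real.rpow_one]
  refine ⟨B * C / t, by positivity, η, hη0, hη1, ?_⟩
  intro x hx hx0 k
  -- the state stays in [0,1]^n
  have hIcc := x_mem_Icc' hh hβ0 hδ0 hδ1 hβ1 hx hx0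
  have hnn : ∀ k i, 0 ≤ x k i := fun k i => (hIcc k i).1
  -- comparison with the linear system
  have hMnn := Mm_nonneg' hM hh hβ0 hδ1
  have hcmp : ∀ k i, x k i ≤ (mono k Mm 0 *ᵥ x 0) i := by
    intro k
    induction k with
    | zero => intro i; simp [mono_zero', Matrix.one_mulVec]
    | succ k ih =>
      intro i
      calc x (k+1) i ≤ (Mm k *ᵥ x k) i := step_le' hM hh hβ0 hx hnn k i
        _ ≤ (Mm k *ᵥ (mono k Mm 0 *ᵥ x 0)) i := mulVec_mono' (hMnn k) ih i
        _ = (mono (k+1) Mm 0 *ᵥ x 0) i := by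
            rw [Matrix.mulVec_mulVec, mono_succ', Nat.zero_add]
  -- norm estimate
  have hnorm : ‖x k‖ ≤ ‖mono k Mm 0‖ * ‖x 0‖ := by
    have h1 : ‖x k‖ ≤ ‖mono k Mm 0 *ᵥ x 0‖ := by
      rw [pi_norm_le_iff_of_nonneg (norm_nonneg _)]
      intro i
      rw [Real.norm_eq_abs, abs_of_nonneg (hnn k i)]
      calc x k i ≤ (mono k Mm 0 *ᵥ x 0) i := hcmp k i
        _ ≤ |(mono k Mm 0 *ᵥ x 0) i| := le_abs_self _
        _ ≤ ‖mono k Mm 0 *ᵥ x 0‖ := by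
            rw [← Real.norm_eq_abs]; exact norm_le_pi_norm _ i
    exact h1.trans (Matrix.linfty_opNorm_mulVec _ _)
  -- decompose k = m * p + r
  set m := k / p with hm
  set r := k % p with hr
  have hk : k = m * p + r := by rw [hm, hr, Nat.mul_comm]; exact (Nat.div_add_mod k p).symm
  have hrp : r < p := Nat.mod_lt _ hp
  have hmono : mono k Mm 0 = mono r Mm 0 * A ^ m := by
    rw [hk, mono_add', mono_shift_mul' p hMper, mono_mul_pow' p hMper, hA]
  have hnormk : ‖mono k Mm 0‖ ≤ B * (C * t ^ m) := by
    rw [hmono]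
    calc ‖mono r Mm 0 * A ^ m‖ ≤ ‖mono r Mm 0‖ * ‖A ^ m‖ := norm_mul_le _ _
      _ ≤ B * (C * t ^ m) :=
          mul_le_mul (hBr r hrp) (hCt m) (norm_nonneg _) hB0.le
  -- relate t ^ m and η ^ k
  have hηk : t ^ m * t ≤ η ^ k := by
    have h1 : η ^ k = (η ^ p) ^ m * η ^ r := by
      rw [hk, pow_add, pow_mul']
    rw [h1, hηp]
    have h2 : η ^ p ≤ η ^ r := pow_le_pow_of_le_one hη0 hη1.le hrp.le
    rw [hηp] at h2
    exact mul_le_mul_of_nonneg_left h2 (by positivity)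
  -- final chain
  have hfin : ‖x k‖ ≤ B * (C * t ^ m) * ‖x 0‖ :=
    hnorm.trans (mul_le_mul_of_nonneg_right hnormk (norm_nonneg _))
  have hx0n : (0:ℝ) ≤ ‖x 0‖ := norm_nonneg _
  calc ‖x k‖ ≤ B * (C * t ^ m) * ‖x 0‖ := hfin
    _ ≤ B * C / t * ‖x 0‖ * η ^ k := by
        rw [div_mul_eq_mul_div, div_mul_eq_mul_div, le_div_iff₀ ht0]
        calc B * (C * t ^ m) * ‖x 0‖ * t = B * C * ‖x 0‖ * (t ^ m * t) := by ring
          _ ≤ B * C * ‖x 0‖ * η ^ k :=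
              mul_le_mul_of_nonneg_left hηk (by positivity)
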